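/- Suppose M(t) = G M̃(t) for all t and M̃ is continuously differentiable with M̃'(t) = G̃ M̃(t) for all t, for some constant matrices G, G̃ ∈ ℝ^{n×n}. Let w be a twice continuously differentiable solution of the adjoint system with data (w_T, z_T). Then φ := w' is a solution of the adjoint system with the same memory kernel M and with data (φ_T, ẑ_T) where φ_T = −Aᵀ w_T + M̃(0)ᵀ z_T and ẑ_T = Gᵀ w_T − G̃ᵀ z_T; that is, φ'(t) = −Aᵀ φ(t) − ∫_t^T M(s−t)ᵀ φ(s) ds + M̃(T−t)ᵀ (Gᵀ w_T − G̃ᵀ z_T) for t ∈ [0,T), and φ(T) = −Aᵀ w_T + M̃(0)ᵀ z_T. -/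

import Mathlib

open MeasureTheory Matrix Set NormedSpace

section ExpEntry
attribute [local instance] Matrix.linftyOpSemiNormedRing Matrix.linftyOpNormedRing
  Matrix.linftyOpNormedAlgebra

variable {n : ℕ}

noncomputable def entryCLM (n : ℕ) (i j : Fin n) : Matrix (Fin n) (Fin n) ℝ →L[ℝ] ℝ :=
  LinearMap.toContinuousLinearMap (Matrix.entryLinearMap ℝ ℝ i j)

lemma hasDerivAt_expM_entry (B : Matrix (Fin n) (Fin n) ℝ) (t : ℝ) (i j : Fin n) :
    HasDerivAt (fun u : ℝ => exp (u • B) i j) ((exp (t • B) * B) i j) t := by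
  have h := hasDerivAt_exp_smul_const (𝕂 := ℝ) B t
  exact ((entryCLM n i j).hasFDerivAt.comp_hasDerivAt t h)

lemma expM_mul_comm (B : Matrix (Fin n) (Fin n) ℝ) (t : ℝ) :
    exp (t • B) * B = B * exp (t • B) :=
  (hasDerivAt_exp_smul_const (𝕂 := ℝ) B t).unique (hasDerivAt_exp_smul_const' (𝕂 := ℝ) B t)

end ExpEntry

variable {n : ℕ}

lemma expM_add (B : Matrix (Fin n) (Fin n) ℝ) (a b : ℝ) :
    exp ((a + b) • B) = exp (a • B) * exp (b • B) := by
  rw [add_smul]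
  exact Matrix.exp_add_of_commute _ _ (((Commute.refl B).smul_left a).smul_right b)

lemma expM_zero (B : Matrix (Fin n) (Fin n) ℝ) : exp ((0:ℝ) • B) = 1 := by
  rw [zero_smul, exp_zero]

lemma expM_entry_continuous (B : Matrix (Fin n) (Fin n) ℝ) (i j : Fin n) :
    Continuous (fun u : ℝ => exp (u • B) i j) :=
  continuous_iff_continuousAt.2 fun t => (hasDerivAt_expM_entry B t i j).continuousAt

/-- entrywise product rule for matrix-valued functions -/
lemma hasDerivAt_matmul_entry {X Y : ℝ → Matrix (Fin n) (Fin n) ℝ}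
    {X' Y' : Matrix (Fin n) (Fin n) ℝ} {t : ℝ}
    (hX : ∀ i j, HasDerivAt (fun u => X u i j) (X' i j) t)
    (hY : ∀ i j, HasDerivAt (fun u => Y u i j) (Y' i j) t) (i j : Fin n) :
    HasDerivAt (fun u => (X u * Y u) i j) ((X' * Y t + X t * Y') i j) t := by
  simp only [Matrix.mul_apply, Matrix.add_apply]
  rw [← Finset.sum_add_distrib]
  exact HasDerivAt.fun_sum fun k _ => (hX i k).mul (hY k j)

/-- vector-level product rule for `Q t *ᵥ v t` from entrywise data. -/
lemma hasDerivAt_mulVec {Q : ℝ → Matrix (Fin n) (Fin n) ℝ} {Q' : Matrix (Fin n) (Fin n) ℝ}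
    {v : ℝ → Fin n → ℝ} {v' : Fin n → ℝ} {t : ℝ}
    (hQ : ∀ i j, HasDerivAt (fun u => Q u i j) (Q' i j) t)
    (hv : ∀ j, HasDerivAt (fun u => v u j) (v' j) t) :
    HasDerivAt (fun u => Q u *ᵥ v u) (Q' *ᵥ v t + Q t *ᵥ v') t := by
  rw [hasDerivAt_pi]
  intro i
  simp only [Matrix.mulVec, dotProduct, Pi.add_apply]
  rw [← Finset.sum_add_distrib]
  exact HasDerivAt.fun_sum fun k _ => (hQ i k).mul (hv k)

lemma hasDerivAt_const_entry (Q : Matrix (Fin n) (Fin n) ℝ) (t : ℝ) (i j : Fin n) :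
    HasDerivAt (fun _ : ℝ => Q i j) ((0 : Matrix (Fin n) (Fin n) ℝ) i j) t := by
  simpa using hasDerivAt_const t (Q i j)

lemma hasDerivAt_expM_entry_neg (B : Matrix (Fin n) (Fin n) ℝ) (t : ℝ) (i j : Fin n) :
    HasDerivAt (fun u : ℝ => exp ((-u) • B) i j) ((-(B * exp ((-t) • B))) i j) t := by
  have h : HasDerivAt (fun u : ℝ => exp ((-u) • B) i j)
      ((exp ((-t) • B) * B) i j * (-1)) t :=
    (hasDerivAt_expM_entry B (-t) i j).comp t (hasDerivAt_neg t)
  rw [expM_mul_comm] at h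
  simpa [Matrix.neg_apply, mul_neg_one] using h

lemma hasDerivAt_expM_entry_const_sub (B : Matrix (Fin n) (Fin n) ℝ) (T t : ℝ) (i j : Fin n) :
    HasDerivAt (fun u : ℝ => exp ((T - u) • B) i j) ((-(B * exp ((T - t) • B))) i j) t := by
  have h : HasDerivAt (fun u : ℝ => exp ((T - u) • B) i j)
      ((exp ((T - t) • B) * B) i j * (-1)) t :=
    (hasDerivAt_expM_entry B (T - t) i j).comp t ((hasDerivAt_id t).const_sub T)
  rw [expM_mul_comm] at h
  simpa [Matrix.neg_apply, mul_neg_one] using h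

lemma Mt_rep (Gt : Matrix (Fin n) (Fin n) ℝ) (Mt : ℝ → Matrix (Fin n) (Fin n) ℝ)
    (hMt' : ∀ t, ∀ i j, HasDerivAt (fun s => Mt s i j) ((Gt * Mt t) i j) t) (u : ℝ) :
    (Mt u)ᵀ = (Mt 0)ᵀ * exp (u • Gtᵀ) := by
  set B := Gtᵀ with hB
  set E : ℝ → Matrix (Fin n) (Fin n) ℝ := fun u => exp (u • B) with hE
  have hN : ∀ t : ℝ, ∀ i j, HasDerivAt (fun v => ((Mt v)ᵀ * E (-v)) i j) 0 t := by
    intro t i j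
    have hX : ∀ i j, HasDerivAt (fun v => (Mt v)ᵀ i j) ((Gt * Mt t)ᵀ i j) t := by
      intro i j
      simpa [Matrix.transpose_apply] using hMt' t j i
    have hY : ∀ i j, HasDerivAt (fun v => E (-v) i j) ((-(B * E (-t))) i j) t :=
      fun i j => hasDerivAt_expM_entry_neg B t i j
    have h := hasDerivAt_matmul_entry hX hY i j
    have hzero : (Gt * Mt t)ᵀ * E (-t) + (Mt t)ᵀ * -(B * E (-t)) = 0 := by
      rw [Matrix.transpose_mul, hB]
      rw [Matrix.mul_neg, mul_assoc]
      exact add_neg_cancel _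
    rw [hzero] at h
    simpa using h
  have hconst : ∀ u : ℝ, ∀ i j, ((Mt u)ᵀ * E (-u)) i j = ((Mt 0)ᵀ * E (-0)) i j := by
    intro u i j
    exact is_const_of_deriv_eq_zero
      (fun x => (hN x i j).differentiableAt) (fun x => (hN x i j).deriv) u 0
  have hNmat : (Mt u)ᵀ * E (-u) = (Mt 0)ᵀ := by
    ext i j
    rw [hconst u i j]
    simp [hE, neg_zero, expM_zero]
  calc (Mt u)ᵀ = (Mt u)ᵀ * (E (-u) * E u) := by
        rw [← expM_add, neg_add_cancel, expM_zero, mul_one]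
      _ = ((Mt u)ᵀ * E (-u)) * E u := by rw [mul_assoc]
      _ = (Mt 0)ᵀ * E u := by rw [hNmat]

lemma continuous_mulVec_fn {Q : ℝ → Matrix (Fin n) (Fin n) ℝ} {v : ℝ → Fin n → ℝ}
    (hQ : ∀ i j, Continuous fun u => Q u i j) (hv : Continuous v) :
    Continuous fun u => Q u *ᵥ v u := by
  refine continuous_pi fun i => ?_
  simp only [Matrix.mulVec, dotProduct]
  exact continuous_finset_sum _ fun k _ => (hQ i k).mul ((continuous_apply k).comp hv)

/-- if `M = G M̃` and `M̃' = G̃ M̃`, and `w` is a twice continuously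
differentiable solution of the (differential) adjoint system with data `(w_T, z_T)`,
then `φ := w'` solves the adjoint system with the same kernel `M` and with data
`φ_T = -Aᵀ w_T + M̃(0)ᵀ z_T`, `ẑ_T = Gᵀ w_T - G̃ᵀ z_T`. -/
theorem deriv_of_adjoint_solution_solves_adjoint
    (T : ℝ) (hT : 0 < T) (n : ℕ)
    (A G Gt : Matrix (Fin n) (Fin n) ℝ)
    (M Mt : ℝ → Matrix (Fin n) (Fin n) ℝ)
    (hMcont : ∀ i j, Continuous (fun t => M t i j))
    (hMtcont : ∀ i j, Continuous (fun t => Mt t i j))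
    (hMG : ∀ t, M t = G * Mt t)
    (hMt' : ∀ t, ∀ i j, HasDerivAt (fun s => Mt s i j) ((Gt * Mt t) i j) t)
    (wT zT : Fin n → ℝ) (w : ℝ → Fin n → ℝ)
    (hw : ContDiff ℝ 2 w)
    -- `w` solves the differential adjoint system with data `(wT, zT)`
    (heq : ∀ t ∈ Set.Ico 0 T,
      deriv w t = -(Aᵀ *ᵥ w t) - (∫ s in Set.Ioc t T, (M (s - t))ᵀ *ᵥ w s)
        + (Mt (T - t))ᵀ *ᵥ zT)
    (hterm : w T = wT) :
    (∀ t ∈ Set.Ico 0 T,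
      deriv (deriv w) t =
        -(Aᵀ *ᵥ deriv w t) - (∫ s in Set.Ioc t T, (M (s - t))ᵀ *ᵥ deriv w s)
          + (Mt (T - t))ᵀ *ᵥ (Gᵀ *ᵥ wT - Gtᵀ *ᵥ zT)) ∧
    deriv w T = -(Aᵀ *ᵥ wT) + (Mt 0)ᵀ *ᵥ zT := by
  classical
  -- smoothness bookkeeping
  have hw2 := contDiff_succ_iff_deriv.mp (show ContDiff ℝ (1 + 1) w by
    rw [one_add_one_eq_two]; exact_mod_cast hw)
  have hdw : Differentiable ℝ w := hw2.1
  have hcdw : ContDiff ℝ 1 (deriv w) := hw2.2.2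
  have hddw : Differentiable ℝ (deriv w) := hcdw.differentiable one_ne_zero
  have hcontdw : Continuous (deriv w) := hddw.continuous
  have hcontw : Continuous w := hw.continuous
  have hwD : ∀ t : ℝ, ∀ j, HasDerivAt (fun u => w u j) (deriv w t j) t :=
    fun t j => (hasDerivAt_pi.1 (hdw t).hasDerivAt) j
  set B := Gtᵀ with hB
  set P := (Mt 0)ᵀ with hP
  set E : ℝ → Matrix (Fin n) (Fin n) ℝ := fun u => exp (u • B) with hEdef
  have key : ∀ u, (Mt u)ᵀ = P * E u := fun u => Mt_rep Gt Mt hMt' u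
  have hEcont : ∀ i j, Continuous fun u => E u i j := expM_entry_continuous B
  have hEadd : ∀ a b : ℝ, E a * E b = E (a + b) := fun a b => (expM_add B a b).symm
  have hE0 : E 0 = 1 := expM_zero B
  -- the auxiliary integrand and primitive
  set c : ℝ → Fin n → ℝ := fun s => (E s * Gᵀ) *ᵥ w s with hcdef
  have hc : Continuous c := by
    refine continuous_mulVec_fn (fun i j => ?_) hcontw
    simp only [Matrix.mul_apply]
    exact continuous_finset_sum _ fun k _ => (hEcont i k).mul continuous_const
  set J : ℝ → Fin n → ℝ := fun t => ∫ s in t..T, c s with hJdef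
  have hJd : ∀ t, HasDerivAt J (-(c t)) t := fun t =>
    intervalIntegral.integral_hasDerivAt_left (hc.intervalIntegrable t T)
      (hc.stronglyMeasurable.stronglyMeasurableAtFilter) hc.continuousAt
  have hJcont : Continuous J := continuous_iff_continuousAt.2 fun t => (hJd t).continuousAt
  -- pulling a constant matrix through the integral
  have pull : ∀ (Q : Matrix (Fin n) (Fin n) ℝ) (t : ℝ), t ≤ T →
      Q *ᵥ J t = ∫ s in Set.Ioc t T, Q *ᵥ c s := by
    intro Q t ht
    have hint : IntegrableOn c (Set.Ioc t T) volume := hc.integrableOn_Ioc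
    have hL := (LinearMap.toContinuousLinearMap (Matrix.mulVecLin Q)).integral_comp_comm hint
    simp only [LinearMap.coe_toContinuousLinearMap', Matrix.mulVecLin_apply] at hL
    rw [hJdef]
    simp only
    rw [intervalIntegral.integral_of_le ht]
    exact hL.symm
  -- matrix algebra identities
  have halg0 : ∀ t s : ℝ, P * E (-t) * (E s * Gᵀ) = (M (s - t))ᵀ := by
    intro t s
    rw [← mul_assoc, mul_assoc P (E (-t)) (E s), hEadd, neg_add_eq_sub, ← key,
      ← Matrix.transpose_mul, ← hMG]
  have halg1 : ∀ t s : ℝ, (P * E (-t)) *ᵥ c s = (M (s - t))ᵀ *ᵥ w s := by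
    intro t s
    rw [hcdef]
    simp only
    rw [Matrix.mulVec_mulVec, halg0]
  have halgB : ∀ u : ℝ, P * (B * E u) = (Gt * Mt u)ᵀ := by
    intro u
    rw [← expM_mul_comm, ← mul_assoc, ← key, Matrix.transpose_mul, hB]
  have halg2 : ∀ t s : ℝ, (P * (B * E (-t))) *ᵥ c s = (G * (Gt * Mt (s - t)))ᵀ *ᵥ w s := by
    intro t s
    rw [hcdef]
    simp only
    rw [Matrix.mulVec_mulVec]
    have h1 : P * (B * E (-t)) * (E s * Gᵀ) = P * (B * E (-t + s)) * Gᵀ := by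
      rw [← hEadd]
      simp only [mul_assoc]
    rw [h1, neg_add_eq_sub, halgB, ← Matrix.transpose_mul]
  -- entrywise derivatives of the matrix coefficient functions
  have hQ1 : ∀ t : ℝ, ∀ i j, HasDerivAt (fun u => (P * E (-u)) i j)
      ((-(P * (B * E (-t)))) i j) t := by
    intro t i j
    have h := hasDerivAt_matmul_entry (X := fun _ => P) (X' := 0) (Y := fun u => E (-u))
      (Y' := -(B * E (-t))) (fun i j => hasDerivAt_const_entry P t i j)
      (fun i j => hasDerivAt_expM_entry_neg B t i j) i j
    simpa [Matrix.mul_neg] using h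
  have hQ2 : ∀ t : ℝ, ∀ i j, HasDerivAt (fun u => (P * E (T - u)) i j)
      ((-(P * (B * E (T - t)))) i j) t := by
    intro t i j
    have h := hasDerivAt_matmul_entry (X := fun _ => P) (X' := 0) (Y := fun u => E (T - u))
      (Y' := -(B * E (T - t))) (fun i j => hasDerivAt_const_entry P t i j)
      (fun i j => hasDerivAt_expM_entry_const_sub B T t i j) i j
    simpa [Matrix.mul_neg] using h
  -- the closed-form function g, equal to `deriv w` on `Ico 0 T`
  set g : ℝ → Fin n → ℝ :=
    fun u => -(Aᵀ *ᵥ w u) - (P * E (-u)) *ᵥ J u + (P * E (T - u)) *ᵥ zT with hgdef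
  have hgd : ∀ t : ℝ, HasDerivAt g
      (-(Aᵀ *ᵥ deriv w t) - ((-(P * (B * E (-t)))) *ᵥ J t + (P * E (-t)) *ᵥ (-(c t)))
        + ((-(P * (B * E (T - t)))) *ᵥ zT + (P * E (T - t)) *ᵥ (0 : Fin n → ℝ))) t := by
    intro t
    have h1 : HasDerivAt (fun u => Aᵀ *ᵥ w u)
        ((0 : Matrix (Fin n) (Fin n) ℝ) *ᵥ w t + Aᵀ *ᵥ deriv w t) t :=
      hasDerivAt_mulVec (fun i j => hasDerivAt_const_entry Aᵀ t i j) (hwD t)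
    have h1' : HasDerivAt (fun u => -(Aᵀ *ᵥ w u)) (-(Aᵀ *ᵥ deriv w t)) t := by
      simpa [Matrix.zero_mulVec] using h1.fun_neg
    have h2 : HasDerivAt (fun u => (P * E (-u)) *ᵥ J u)
        ((-(P * (B * E (-t)))) *ᵥ J t + (P * E (-t)) *ᵥ (-(c t))) t :=
      hasDerivAt_mulVec (hQ1 t) (fun j => (hasDerivAt_pi.1 (hJd t)) j)
    have h3 : HasDerivAt (fun u => (P * E (T - u)) *ᵥ zT)
        ((-(P * (B * E (T - t)))) *ᵥ zT + (P * E (T - t)) *ᵥ (0 : Fin n → ℝ)) t :=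
      hasDerivAt_mulVec (hQ2 t) (fun j => hasDerivAt_const t (zT j))
    exact (h1'.sub h2).add h3
  -- g agrees with deriv w on [0, T)
  have hgA : ∀ u ∈ Set.Ico (0:ℝ) T, deriv w u = g u := by
    intro u hu
    rw [heq u hu, hgdef]
    simp only
    congr 1
    · congr 1
      rw [pull _ u (le_of_lt hu.2)]
      exact integral_congr_ae (Filter.Eventually.of_forall fun s => (halg1 u s).symm)
    · rw [key (T - u)]
  -- integration by parts / FTC identity
  have hIBP : ∀ t ∈ Set.Ico (0:ℝ) T,
      (∫ s in Set.Ioc t T, ((G * (Gt * Mt (s - t)))ᵀ *ᵥ w s + (M (s - t))ᵀ *ᵥ deriv w s))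
        = (M (T - t))ᵀ *ᵥ w T - (M 0)ᵀ *ᵥ w t := by
    intro t ht
    have hle : t ≤ T := le_of_lt ht.2
    have hf : ∀ s : ℝ, HasDerivAt (fun s => (M (s - t))ᵀ *ᵥ w s)
        ((G * (Gt * Mt (s - t)))ᵀ *ᵥ w s + (M (s - t))ᵀ *ᵥ deriv w s) s := by
      intro s
      refine hasDerivAt_mulVec (fun i j => ?_) (hwD s)
      have hent : ∀ k l, HasDerivAt (fun s : ℝ => Mt (s - t) k l) ((Gt * Mt (s - t)) k l) s := by
        intro k l
        have := (hMt' (s - t) k l).comp s ((hasDerivAt_id s).sub_const t)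
        rw [mul_one] at this
        exact this
      have h := hasDerivAt_matmul_entry (X := fun _ => G) (X' := 0)
          (Y := fun s : ℝ => Mt (s - t)) (Y' := Gt * Mt (s - t))
          (fun k l => hasDerivAt_const_entry G s k l) hent j i
      simp only [Matrix.transpose_apply, hMG]
      simpa using h
    have hcM : ∀ (N : ℝ → Matrix (Fin n) (Fin n) ℝ), (∀ i j, Continuous fun u => N u i j) →
        ∀ i j, Continuous fun s : ℝ => N (s - t) i j := fun N hN i j =>
      (hN i j).comp (continuous_id.sub continuous_const)
    have hcint : Continuous (fun s => (G * (Gt * Mt (s - t)))ᵀ *ᵥ w s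
        + (M (s - t))ᵀ *ᵥ deriv w s) := by
      refine Continuous.add ?_ ?_
      · refine continuous_mulVec_fn (fun i j => ?_) hcontw
        simp only [Matrix.transpose_apply, Matrix.mul_apply]
        refine continuous_finset_sum _ fun k _ => continuous_const.mul ?_
        exact continuous_finset_sum _ fun l _ => continuous_const.mul (hcM Mt hMtcont l i)
      · refine continuous_mulVec_fn (fun i j => ?_) hcontdw
        simp only [Matrix.transpose_apply]
        exact hcM M hMcont j i
    have hFTC := intervalIntegral.integral_eq_sub_of_hasDerivAt
      (f := fun s => (M (s - t))ᵀ *ᵥ w s) (fun s _ => hf s) (hcint.intervalIntegrable t T)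
    rw [intervalIntegral.integral_of_le hle] at hFTC
    rw [hFTC]
    simp only [sub_self]
  -- splitting of the integral
  have hsplit : ∀ t ∈ Set.Ico (0:ℝ) T, (P * (B * E (-t))) *ᵥ J t
      = (M (T - t))ᵀ *ᵥ w T - (M 0)ᵀ *ᵥ w t
        - ∫ s in Set.Ioc t T, (M (s - t))ᵀ *ᵥ deriv w s := by
    intro t ht
    have hle := le_of_lt ht.2
    have hcM : ∀ (N : ℝ → Matrix (Fin n) (Fin n) ℝ), (∀ i j, Continuous fun u => N u i j) →
        ∀ i j, Continuous fun s : ℝ => N (s - t) i j := fun N hN i j =>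
      (hN i j).comp (continuous_id.sub continuous_const)
    have hcont1 : Continuous fun s => (G * (Gt * Mt (s - t)))ᵀ *ᵥ w s := by
      refine continuous_mulVec_fn (fun i j => ?_) hcontw
      simp only [Matrix.transpose_apply, Matrix.mul_apply]
      refine continuous_finset_sum _ fun k _ => continuous_const.mul ?_
      exact continuous_finset_sum _ fun l _ => continuous_const.mul (hcM Mt hMtcont l i)
    have hcont2 : Continuous fun s => (M (s - t))ᵀ *ᵥ deriv w s := by
      refine continuous_mulVec_fn (fun i j => ?_) hcontdw
      simp only [Matrix.transpose_apply]
      exact hcM M hMcont j i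
    have hi1 : IntegrableOn (fun s => (G * (Gt * Mt (s - t)))ᵀ *ᵥ w s) (Set.Ioc t T) volume :=
      hcont1.integrableOn_Ioc
    have hi2 : IntegrableOn (fun s => (M (s - t))ᵀ *ᵥ deriv w s) (Set.Ioc t T) volume :=
      hcont2.integrableOn_Ioc
    have h := hIBP t ht
    rw [integral_add hi1 hi2] at h
    have h2 : (P * (B * E (-t))) *ᵥ J t
        = ∫ s in Set.Ioc t T, (G * (Gt * Mt (s - t)))ᵀ *ᵥ w s := by
      rw [pull _ t hle]
      exact integral_congr_ae (Filter.Eventually.of_forall fun s => halg2 t s)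
    rw [h2]
    exact eq_sub_of_add_eq h
  constructor
  · intro t ht
    have hU : UniqueDiffWithinAt ℝ (Set.Ico (0:ℝ) T) t := uniqueDiffOn_Ico 0 T t ht
    have e1 := ((hgd t).hasDerivWithinAt).congr (fun u hu => hgA u hu) (hgA t ht)
    have e2 := ((hddw t).hasDerivAt).hasDerivWithinAt (s := Set.Ico (0:ℝ) T)
    have hvd := (e2.derivWithin hU).symm.trans (e1.derivWithin hU)
    rw [hvd]
    rw [Matrix.mulVec_zero, add_zero]
    have e3 : (P * E (-t)) *ᵥ (-(c t)) = -((M 0)ᵀ *ᵥ w t) := by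
      rw [Matrix.mulVec_neg, halg1 t t, sub_self]
    have e4 : (-(P * (B * E (-t)))) *ᵥ J t
        = -((M (T - t))ᵀ *ᵥ w T - (M 0)ᵀ *ᵥ w t
            - ∫ s in Set.Ioc t T, (M (s - t))ᵀ *ᵥ deriv w s) := by
      rw [Matrix.neg_mulVec, hsplit t ht]
    have e5 : (-(P * (B * E (T - t)))) *ᵥ zT = -((Gt * Mt (T - t))ᵀ *ᵥ zT) := by
      rw [Matrix.neg_mulVec, halgB]
    rw [e3, e4, e5]
    have e6 : (Mt (T - t))ᵀ *ᵥ (Gᵀ *ᵥ wT - B *ᵥ zT)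
        = (M (T - t))ᵀ *ᵥ wT - (Gt * Mt (T - t))ᵀ *ᵥ zT := by
      rw [Matrix.mulVec_sub, Matrix.mulVec_mulVec, Matrix.mulVec_mulVec, hB,
        ← Matrix.transpose_mul, ← Matrix.transpose_mul, ← hMG]
    rw [e6, hterm]
    abel
  · have hTcl : T ∈ closure (Set.Ico (0:ℝ) T) := by
      rw [closure_Ico hT.ne]
      exact ⟨hT.le, le_rfl⟩
    have hcontg : Continuous g := by
      refine Continuous.add (Continuous.sub ?_ ?_) ?_
      · exact (continuous_mulVec_fn (Q := fun _ => Aᵀ) (fun i j => continuous_const) hcontw).neg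
      · refine continuous_mulVec_fn (fun i j => ?_) hJcont
        simp only [Matrix.mul_apply]
        exact continuous_finset_sum _ fun k _ =>
          continuous_const.mul ((hEcont k j).comp continuous_neg)
      · refine continuous_mulVec_fn (fun i j => ?_) continuous_const
        simp only [Matrix.mul_apply]
        exact continuous_finset_sum _ fun k _ =>
          continuous_const.mul ((hEcont k j).comp (continuous_const.sub continuous_id))
    have hTeq : deriv w T = g T := (Set.EqOn.closure hgA hcontdw hcontg) hTcl
    rw [hTeq]
    show -(Aᵀ *ᵥ w T) - (P * E (-T)) *ᵥ J T + (P * E (T - T)) *ᵥ zT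
        = -(Aᵀ *ᵥ wT) + P *ᵥ zT
    have hJT : J T = 0 := intervalIntegral.integral_same
    rw [hJT, Matrix.mulVec_zero, sub_zero, sub_self, hE0, mul_one, hterm]
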